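/- Let R > 0, let c = −4 coth²(R/2) log cosh(R/2), and define u : (0, R] → ℝ by u(r) = 2(log cosh(r/2))² − 2(log cosh(R/2))² + Li₂(tanh²(r/2)) − Li₂(tanh²(R/2)) + c·log( cosh(r/2)/cosh(R/2) ). For a differentiable function f on (0,R) define (Lf)(r) = (1/sinh r)·d/dr( sinh r · f′(r) ). Then L(Lu)(r) = 1 for all r ∈ (0, R), and u(R) = 0 and u′(R) = 0. -/

import Mathlib

open MeasureTheory Real

/-- The dilogarithm, defined for real `x ≤ 1` by `Li₂(x) = −∫₀ˣ log(1−t)/t dt`. -/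
noncomputable def Li2 (x : ℝ) : ℝ := - ∫ t in (0:ℝ)..x, Real.log (1 - t) / t

/-- The Laplace–Beltrami operator on the hyperbolic plane (curvature −1) acting on
functions of the geodesic distance `r`: `(Lf)(r) = (1/sinh r) (sinh r · f′(r))′`. -/
noncomputable def hypLap (f : ℝ → ℝ) (r : ℝ) : ℝ :=
  (1 / Real.sinh r) * deriv (fun s => Real.sinh s * deriv f s) r

lemma li2_hasDerivAt {x : ℝ} (hx0 : 0 < x) (hx1 : x < 1) :
    HasDerivAt Li2 (-(Real.log (1 - x) / x)) x := by
  have mg : Measurable (fun t : ℝ => Real.log (1 - t) / t) :=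
    (Real.measurable_log.comp (measurable_const.sub measurable_id)).div measurable_id
  have hbound : ∀ t ∈ Set.Ioc (0:ℝ) x, ‖Real.log (1 - t) / t‖ ≤ (1 - x)⁻¹ := by
    intro t ht
    have ht0 : 0 < t := ht.1
    have ht1 : t < 1 := lt_of_le_of_lt ht.2 hx1
    have h1t : 0 < 1 - t := by linarith
    have hlogle : Real.log (1 - t) ≤ 0 := Real.log_nonpos (by linarith) (by linarith)
    have hkey : -Real.log (1 - t) ≤ t / (1 - t) := by
      have := Real.log_le_sub_one_of_pos (show (0:ℝ) < (1-t)⁻¹ by positivity)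
      rw [Real.log_inv] at this
      have : -Real.log (1 - t) ≤ (1-t)⁻¹ - 1 := this
      have heq : (1-t)⁻¹ - 1 = t / (1 - t) := by field_simp; ring
      linarith [heq ▸ this]
    rw [norm_div, Real.norm_eq_abs, Real.norm_eq_abs, abs_of_nonpos hlogle,
      abs_of_pos ht0]
    rw [div_le_iff₀ ht0]
    have h1 : t / (1 - t) ≤ (1 - x)⁻¹ * t := by
      rw [div_le_iff₀ h1t]
      have hx1t : 0 < 1 - x := by linarith
      rw [mul_comm ((1-x)⁻¹) t, mul_assoc]
      have : (1:ℝ) ≤ (1 - x)⁻¹ * (1 - t) := by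
        rw [← div_eq_inv_mul, le_div_iff₀ hx1t]
        linarith [ht.2]
      nlinarith
    linarith
  have hint : IntervalIntegrable (fun t : ℝ => Real.log (1 - t) / t) volume 0 x := by
    rw [intervalIntegrable_iff]
    have huIoc : Set.uIoc (0:ℝ) x = Set.Ioc 0 x := Set.uIoc_of_le hx0.le
    rw [huIoc]
    refine Integrable.mono' (g := fun _ : ℝ => (1-x)⁻¹) (integrableOn_const measure_Ioc_lt_top.ne)
      (mg.aestronglyMeasurable.restrict) ?_
    filter_upwards [ae_restrict_mem measurableSet_Ioc] with t ht
    exact hbound t ht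
  have hcont : ContinuousAt (fun t : ℝ => Real.log (1 - t) / t) x := by
    have h1 : ContinuousAt (fun t : ℝ => Real.log (1 - t)) x :=
      (Real.continuousAt_log (by intro h; linarith [h])).comp
        ((continuous_const.sub continuous_id).continuousAt)
    exact h1.div continuousAt_id hx0.ne'
  have hmeas : StronglyMeasurableAtFilter (fun t : ℝ => Real.log (1 - t) / t)
      (nhds x) volume :=
    mg.stronglyMeasurable.stronglyMeasurableAtFilter
  have h := intervalIntegral.integral_hasDerivAt_right hint hmeas hcont
  exact h.neg

lemma hasDerivAt_logcosh (r : ℝ) :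
    HasDerivAt (fun s => Real.log (Real.cosh (s/2)))
      (Real.sinh (r/2) / (2 * Real.cosh (r/2))) r := by
  have h1 : HasDerivAt (fun s : ℝ => s/2) (1/2) r := (hasDerivAt_id r).div_const 2
  have h2 : HasDerivAt (fun s : ℝ => Real.cosh (s/2)) (Real.sinh (r/2) * (1/2)) r :=
    by have := (Real.hasDerivAt_cosh (r/2)).comp r h1; exact this
  have h3 := h2.log (ne_of_gt (Real.cosh_pos _))
  convert h3 using 1
  field_simp

lemma hasDerivAt_sinh_half (r : ℝ) :
    HasDerivAt (fun s : ℝ => Real.sinh (s/2)) (Real.cosh (r/2) * (1/2)) r :=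
  by have := (Real.hasDerivAt_sinh (r/2)).comp r ((hasDerivAt_id r).div_const 2); exact this

lemma hasDerivAt_cosh_half (r : ℝ) :
    HasDerivAt (fun s : ℝ => Real.cosh (s/2)) (Real.sinh (r/2) * (1/2)) r :=
  by have := (Real.hasDerivAt_cosh (r/2)).comp r ((hasDerivAt_id r).div_const 2); exact this

lemma hasDerivAt_tanh_sq (r : ℝ) :
    HasDerivAt (fun s => (Real.tanh (s/2))^2)
      (Real.sinh (r/2) / Real.cosh (r/2)^3) r := by
  have hch : Real.cosh (r/2) ≠ 0 := ne_of_gt (Real.cosh_pos _)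
  have hfun : (fun s : ℝ => (Real.tanh (s/2))^2)
      = fun s => (Real.sinh (s/2) / Real.cosh (s/2))^2 := by
    funext s; rw [Real.tanh_eq_sinh_div_cosh]
  rw [hfun]
  have hdiv := (hasDerivAt_sinh_half r).div (hasDerivAt_cosh_half r) hch
  have h := hdiv.pow 2
  refine h.congr_deriv ?_; symm
  have hid : Real.cosh (r/2)^2 - Real.sinh (r/2)^2 = 1 := Real.cosh_sq_sub_sinh_sq _
  simp only [Pi.div_apply]
  push_cast
  linear_combination (-(Real.sinh (r/2) / Real.cosh (r/2)^3)) * hid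

lemma tanh_mem_Ioo {x : ℝ} (hx : 0 < x) : Real.tanh x ∈ Set.Ioo (0:ℝ) 1 := by
  rw [Real.tanh_eq_sinh_div_cosh]
  have hch : (0:ℝ) < Real.cosh x := Real.cosh_pos _
  have hsh : (0:ℝ) < Real.sinh x := Real.sinh_pos_iff.2 hx
  constructor
  · positivity
  · rw [div_lt_one hch]
    have := Real.cosh_sub_sinh x
    have : (0:ℝ) < Real.cosh x - Real.sinh x := by rw [this]; positivity
    linarith

lemma one_sub_tanh_sq {x : ℝ} : 1 - (Real.tanh x)^2 = (Real.cosh x ^ 2)⁻¹ := by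
  rw [Real.tanh_eq_sinh_div_cosh]
  have hch : Real.cosh x ≠ 0 := ne_of_gt (Real.cosh_pos _)
  have hid : Real.cosh x^2 - Real.sinh x^2 = 1 := Real.cosh_sq_sub_sinh_sq _
  field_simp
  exact hid

lemma sinh_double (r : ℝ) : Real.sinh r = 2 * Real.sinh (r/2) * Real.cosh (r/2) := by
  have h := Real.sinh_two_mul (r/2)
  rw [show 2*(r/2) = r by ring] at h
  exact h

section main

variable {R c : ℝ}

/-- derivative of u at r > 0 -/
lemma hasDerivAt_u (R c : ℝ) {r : ℝ} (hr : 0 < r) :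
    HasDerivAt (fun r => 2 * (Real.log (Real.cosh (r/2)))^2
        - 2 * (Real.log (Real.cosh (R/2)))^2
        + Li2 ((Real.tanh (r/2))^2) - Li2 ((Real.tanh (R/2))^2)
        + c * Real.log (Real.cosh (r/2) / Real.cosh (R/2)))
      (2 * Real.log (Real.cosh (r/2)) * Real.cosh (r/2) / Real.sinh (r/2)
        + c / 2 * (Real.sinh (r/2) / Real.cosh (r/2))) r := by
  have hr2 : 0 < r/2 := by linarith
  have hch : (0:ℝ) < Real.cosh (r/2) := Real.cosh_pos _
  have hsh : (0:ℝ) < Real.sinh (r/2) := Real.sinh_pos_iff.2 hr2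
  have hchR : (0:ℝ) < Real.cosh (R/2) := Real.cosh_pos _
  have htanh := tanh_mem_Ioo hr2
  have hx0 : (0:ℝ) < (Real.tanh (r/2))^2 := pow_pos htanh.1 2
  have hx1 : (Real.tanh (r/2))^2 < 1 := by
    have := htanh.2
    nlinarith [htanh.1]
  -- pieces
  have hA := hasDerivAt_logcosh r
  have h1 := (hA.pow 2).const_mul (2:ℝ)
  have h2 : HasDerivAt (fun s => Li2 ((Real.tanh (s/2))^2))
      (-(Real.log (1 - (Real.tanh (r/2))^2) / (Real.tanh (r/2))^2)
        * (Real.sinh (r/2) / Real.cosh (r/2)^3)) r := by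
    have := (li2_hasDerivAt hx0 hx1).comp r (hasDerivAt_tanh_sq r); exact this
  have h3 : HasDerivAt (fun s => c * Real.log (Real.cosh (s/2) / Real.cosh (R/2)))
      (c * (Real.sinh (r/2) / (2 * Real.cosh (r/2)))) r := by
    have hfun : (fun s : ℝ => c * Real.log (Real.cosh (s/2) / Real.cosh (R/2)))
        = fun s => c * (Real.log (Real.cosh (s/2)) - Real.log (Real.cosh (R/2))) := by
      funext s; rw [Real.log_div (ne_of_gt (Real.cosh_pos _)) (ne_of_gt hchR)]
    rw [hfun]
    exact ((hA.sub_const _).const_mul c)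
  have hsum := ((((h1.sub_const (2 * (Real.log (Real.cosh (R/2)))^2)).add h2).sub_const
      (Li2 ((Real.tanh (R/2))^2))).add h3)
  refine hsum.congr_deriv ?_; symm
  have hlog : Real.log (1 - (Real.tanh (r/2))^2) = -(2 * Real.log (Real.cosh (r/2))) := by
    rw [one_sub_tanh_sq, Real.log_inv, Real.log_pow]
    push_cast; ring
  rw [hlog, Real.tanh_eq_sinh_div_cosh]
  have hid : Real.cosh (r/2)^2 - Real.sinh (r/2)^2 = 1 := Real.cosh_sq_sub_sinh_sq _
  field_simp
  linear_combination (4 * Real.log (Real.cosh (r/2))) * hid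

end main

/-- The explicit radial function `u` on the hyperbolic geodesic disk of radius `R`
solves the clamped-plate equation `Δ²u = 1` on `(0,R)` with clamped boundary
conditions `u(R) = 0` and `u′(R) = 0`. -/
theorem stmt_4 (R : ℝ) (hR0 : 0 < R)
    (c : ℝ) (hc : c = -4 * (Real.cosh (R/2) / Real.sinh (R/2))^2 * Real.log (Real.cosh (R/2)))
    (u : ℝ → ℝ)
    (hu : ∀ r, u r = 2 * (Real.log (Real.cosh (r/2)))^2 - 2 * (Real.log (Real.cosh (R/2)))^2
        + Li2 ((Real.tanh (r/2))^2) - Li2 ((Real.tanh (R/2))^2)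
        + c * Real.log (Real.cosh (r/2) / Real.cosh (R/2))) :
    (∀ r ∈ Set.Ioo (0:ℝ) R, hypLap (hypLap u) r = 1) ∧ u R = 0 ∧ deriv u R = 0 := by
  have hu' : u = fun r => 2 * (Real.log (Real.cosh (r/2)))^2
      - 2 * (Real.log (Real.cosh (R/2)))^2
      + Li2 ((Real.tanh (r/2))^2) - Li2 ((Real.tanh (R/2))^2)
      + c * Real.log (Real.cosh (r/2) / Real.cosh (R/2)) := funext hu
  -- derivative of u on (0,∞)
  have hDu : ∀ s : ℝ, 0 < s → deriv u s
      = 2 * Real.log (Real.cosh (s/2)) * Real.cosh (s/2) / Real.sinh (s/2)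
        + c / 2 * (Real.sinh (s/2) / Real.cosh (s/2)) := by
    intro s hs
    rw [hu']
    exact (hasDerivAt_u R c hs).deriv
  -- first Laplacian
  have hLu : ∀ r : ℝ, 0 < r → hypLap u r = 2 * Real.log (Real.cosh (r/2)) + 1 + c/2 := by
    intro r hr
    have hr2 : 0 < r/2 := by linarith
    have hsh : (0:ℝ) < Real.sinh (r/2) := Real.sinh_pos_iff.2 hr2
    have hch : (0:ℝ) < Real.cosh (r/2) := Real.cosh_pos _
    have hshr : Real.sinh r = 2 * Real.sinh (r/2) * Real.cosh (r/2) := sinh_double r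
    have hshrne : Real.sinh r ≠ 0 := by rw [hshr]; positivity
    unfold hypLap
    have hev : (fun s => Real.sinh s * deriv u s)
        =ᶠ[nhds r] (fun s => 4 * Real.cosh (s/2)^2 * Real.log (Real.cosh (s/2))
          + c * Real.sinh (s/2)^2) := by
      filter_upwards [Ioi_mem_nhds hr] with s hs
      have hs0 : (0:ℝ) < s := hs
      have hs2 : 0 < s/2 := by linarith
      have hshs : (0:ℝ) < Real.sinh (s/2) := Real.sinh_pos_iff.2 hs2
      have hchs : (0:ℝ) < Real.cosh (s/2) := Real.cosh_pos _
      have hshs2 : Real.sinh s = 2 * Real.sinh (s/2) * Real.cosh (s/2) := sinh_double s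
      rw [hDu s hs0, hshs2]
      field_simp
      ring
    rw [hev.deriv_eq]
    have hder : HasDerivAt (fun s => 4 * Real.cosh (s/2)^2 * Real.log (Real.cosh (s/2))
        + c * Real.sinh (s/2)^2)
        (4 * Real.cosh (r/2) * Real.sinh (r/2) * Real.log (Real.cosh (r/2))
          + 2 * Real.cosh (r/2) * Real.sinh (r/2)
          + c * Real.sinh (r/2) * Real.cosh (r/2)) r := by
      have hA := hasDerivAt_logcosh r
      have hS := hasDerivAt_sinh_half r
      have hC := hasDerivAt_cosh_half r
      have p1 : HasDerivAt (fun s : ℝ => Real.cosh (s/2)^2)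
          ((2:ℕ) * Real.cosh (r/2)^1 * (Real.sinh (r/2) * (1/2))) r := hC.pow 2
      have p2 := ((p1.const_mul (4:ℝ)).mul hA)
      have p3 : HasDerivAt (fun s : ℝ => Real.sinh (s/2)^2)
          ((2:ℕ) * Real.sinh (r/2)^1 * (Real.cosh (r/2) * (1/2))) r := hS.pow 2
      have p4 := p3.const_mul c
      have := p2.add p4
      refine this.congr_deriv ?_; symm
      push_cast
      field_simp
      ring
    rw [hder.deriv]
    rw [hshr]
    field_simp
    ring
  -- boundary conditions
  have hchR : (0:ℝ) < Real.cosh (R/2) := Real.cosh_pos _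
  have hshR : (0:ℝ) < Real.sinh (R/2) := Real.sinh_pos_iff.2 (by linarith)
  have huR : u R = 0 := by
    rw [hu, div_self (ne_of_gt hchR), Real.log_one]
    ring
  have hduR : deriv u R = 0 := by
    rw [hDu R hR0, hc]
    field_simp
    ring
  refine ⟨?_, huR, hduR⟩
  intro r hr
  obtain ⟨hr0, hrR⟩ := hr
  have hr2 : 0 < r/2 := by linarith
  have hsh : (0:ℝ) < Real.sinh (r/2) := Real.sinh_pos_iff.2 hr2
  have hch : (0:ℝ) < Real.cosh (r/2) := Real.cosh_pos _
  have hshr : Real.sinh r = 2 * Real.sinh (r/2) * Real.cosh (r/2) := sinh_double r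
  have hshrne : Real.sinh r ≠ 0 := by rw [hshr]; positivity
  show (1 / Real.sinh r) * deriv (fun s => Real.sinh s * deriv (hypLap u) s) r = 1
  have hev2 : (fun s => Real.sinh s * deriv (hypLap u) s)
      =ᶠ[nhds r] (fun s => 2 * Real.sinh (s/2)^2) := by
    filter_upwards [Ioi_mem_nhds hr0] with s hs
    have hs0 : (0:ℝ) < s := hs
    have hs2 : 0 < s/2 := by linarith
    have hchs : (0:ℝ) < Real.cosh (s/2) := Real.cosh_pos _
    have hdLu : deriv (hypLap u) s = Real.sinh (s/2) / Real.cosh (s/2) := by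
      have hev3 : hypLap u =ᶠ[nhds s]
          (fun t => 2 * Real.log (Real.cosh (t/2)) + 1 + c/2) := by
        filter_upwards [Ioi_mem_nhds hs0] with t ht
        exact hLu t ht
      rw [hev3.deriv_eq]
      have := (((hasDerivAt_logcosh s).const_mul (2:ℝ)).add_const 1).add_const (c/2)
      rw [this.deriv]
      field_simp
    rw [hdLu]
    have hshs2 : Real.sinh s = 2 * Real.sinh (s/2) * Real.cosh (s/2) := sinh_double s
    rw [hshs2]
    field_simp
  rw [hev2.deriv_eq]
  have hder2 : HasDerivAt (fun s : ℝ => 2 * Real.sinh (s/2)^2)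
      (2 * ((2:ℕ) * Real.sinh (r/2)^1 * (Real.cosh (r/2) * (1/2)))) r :=
    ((hasDerivAt_sinh_half r).pow 2).const_mul 2
  rw [hder2.deriv, hshr]
  field_simp
  norm_num
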